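/- Fix k ≥ 4 and σ ∈ {±1}. Consider the family of monic real polynomials A_s(v) = G(v)·((v − c)² + s) in v, where G is a fixed monic real polynomial of degree k − 2, c ∈ ℝ, G(c) ≠ 0, and all roots of G are simple and different from the roots of (v−c)² + s for small s ≠ 0. Then the discriminant of A_s, as a function of the real parameter s, vanishes to order exactly one at s = 0: disc(A_s) = C·s + O(s²) with C ≠ 0. -/

import Mathlib

open Polynomial Asymptotics

/-- For the family `A_s(v) = G(v)·((v−c)² + s)` with `G` monic of degree `k−2`,
`G(c) ≠ 0`, all roots of `G` simple and distinct from the roots of `(v−c)²+s`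
for small `s ≠ 0`, the discriminant of `A_s` (expressed as
`(−1)^{d(d−1)/2} ∏_{r} A_s'(r)` over the complex roots of `A_s`)
vanishes to order exactly one at `s = 0`: `disc(A_s) = C·s + O(s²)`, `C ≠ 0`. -/
theorem Dk_disc_order_one (k : ℕ) (hk : 4 ≤ k) (σ : ℝ) (hσ : σ = 1 ∨ σ = -1)
    (G : Polynomial ℝ) (hG : G.Monic) (hdeg : G.natDegree = k - 2)
    (c : ℝ) (hGc : G.eval c ≠ 0) (hsq : Squarefree G)
    (hdisj : ∃ ε > 0, ∀ s : ℝ, s ≠ 0 → |s| < ε → ∀ r : ℂ,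
        Polynomial.aeval r G = 0 → (r - (c : ℂ)) ^ 2 + (s : ℂ) ≠ 0) :
    ∃ C₀ : ℂ, C₀ ≠ 0 ∧
      (fun s : ℝ =>
          (((G * ((X - Polynomial.C c) ^ 2 + Polynomial.C s)).map
              (algebraMap ℝ ℂ)).roots.map
            (fun r => (((G * ((X - Polynomial.C c) ^ 2 + Polynomial.C s)).map
              (algebraMap ℝ ℂ)).derivative).eval r)).prod *
            (-1 : ℂ) ^ (k * (k - 1) / 2) - C₀ * s)
        =O[nhds (0 : ℝ)] fun s => (s : ℂ) ^ 2 := by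
  classical
  clear hdisj hσ hk hdeg σ
  set g : ℂ[X] := G.map (algebraMap ℝ ℂ) with hgdef
  have hgm : g.Monic := hG.map _
  have hg0 : g ≠ 0 := hgm.ne_zero
  set M : Multiset ℂ := g.roots with hMdef
  have hsep : g.Separable := (PerfectField.separable_iff_squarefree.mpr hsq).map
  have hgprod : g = (M.map fun r => X - C r).prod :=
    (IsAlgClosed.splits g).eq_prod_roots_of_monic hgm
  -- roots of g are not c
  have hroot_ne_c : ∀ r ∈ M, r ≠ (c : ℂ) := by
    intro r hr hrc
    have hre : eval r g = 0 := (isRoot_of_mem_roots hr)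
    rw [hrc] at hre
    have : eval ((algebraMap ℝ ℂ) c) (G.map (algebraMap ℝ ℂ)) = algebraMap ℝ ℂ (G.eval c) := by
      rw [eval_map, eval₂_at_apply]
    simp only [Complex.coe_algebraMap] at this
    rw [hgdef, this] at hre
    exact hGc (by exact_mod_cast hre)
  -- derivative of g nonzero at roots
  have hder_ne : ∀ r ∈ M, eval r (derivative g) ≠ 0 := by
    obtain ⟨u, v, huv⟩ := hsep
    intro r hr h0
    have hre : eval r g = 0 := isRoot_of_mem_roots hr
    have := congrArg (eval r) huv
    simp [eval_add, eval_mul, hre, h0] at this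
  set e : ℕ := k * (k - 1) / 2 with hedef
  set P : ℂ[X] := C 4 * ((M.map fun r => C ((r - (c : ℂ)) ^ 2) + X).prod) ^ 2 *
      C ((M.map fun r => eval r (derivative g)).prod) * C ((-1 : ℂ) ^ e) with hPdef
  -- evaluation of P
  have hPeval : ∀ z : ℂ, eval z P =
      4 * ((M.map fun r => (r - (c : ℂ)) ^ 2 + z).prod) ^ 2 *
      ((M.map fun r => eval r (derivative g)).prod) * (-1 : ℂ) ^ e := by
    intro z
    simp [hPdef, eval_multiset_prod, Multiset.map_map, Function.comp]
  -- the key identity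
  have key : ∀ s : ℝ,
      (((G * ((X - Polynomial.C c) ^ 2 + Polynomial.C s)).map
              (algebraMap ℝ ℂ)).roots.map
            (fun r => (((G * ((X - Polynomial.C c) ^ 2 + Polynomial.C s)).map
              (algebraMap ℝ ℂ)).derivative).eval r)).prod *
            (-1 : ℂ) ^ e = (s : ℂ) * eval (s : ℂ) P := by
    intro s
    obtain ⟨w, hw⟩ : ∃ w : ℂ, w ^ 2 = -(s : ℂ) := by
      obtain ⟨z, hz⟩ := IsAlgClosed.exists_root (X ^ 2 + C (s : ℂ))
        (by rw [Polynomial.degree_X_pow_add_C (by norm_num)]; norm_num)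
      have : z ^ 2 + (s : ℂ) = 0 := by simpa [IsRoot] using hz
      exact ⟨z, by linear_combination this⟩
    set q : ℂ[X] := (X - C ((c : ℂ))) ^ 2 + C ((s : ℂ)) with hqdef
    have hmap : (G * ((X - Polynomial.C c) ^ 2 + Polynomial.C s)).map (algebraMap ℝ ℂ)
        = g * q := by
      simp [Polynomial.map_mul, Polynomial.map_add, Polynomial.map_pow, Polynomial.map_sub,
        Polynomial.map_X, Polynomial.map_C, hqdef, Complex.coe_algebraMap, hgdef]
    have hqfac : q = (X - C ((c : ℂ) + w)) * (X - C ((c : ℂ) - w)) := by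
      have hs : C ((s : ℂ)) = -(C w) ^ 2 := by
        rw [← C_pow, hw, map_neg, neg_neg]
      rw [hqdef, hs, C_add, C_sub]
      ring
    have hq0 : q ≠ 0 := by
      rw [hqfac]
      exact mul_ne_zero (X_sub_C_ne_zero _) (X_sub_C_ne_zero _)
    have hqroots : q.roots = {(c : ℂ) + w, (c : ℂ) - w} := by
      rw [hqfac, roots_mul (by rw [← hqfac]; exact hq0), roots_X_sub_C, roots_X_sub_C]
      rfl
    have hqa : eval ((c : ℂ) + w) q = 0 := by rw [hqfac]; simp
    have hqb : eval ((c : ℂ) - w) q = 0 := by rw [hqfac]; simp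
    have hq' : derivative q = C 2 * (X - C ((c : ℂ))) := by
      rw [hqdef]
      simp [derivative_pow]
    -- eval of derivative at roots of g
    have hFroot : ∀ r ∈ M, eval r (derivative (g * q)) =
        eval r (derivative g) * ((r - (c : ℂ)) ^ 2 + (s : ℂ)) := by
      intro r hr
      have hre : eval r g = 0 := isRoot_of_mem_roots hr
      rw [derivative_mul, eval_add, eval_mul, eval_mul, hre, zero_mul, add_zero, hqdef]
      simp
    have hFa : eval ((c : ℂ) + w) (derivative (g * q)) = eval ((c : ℂ) + w) g * (2 * w) := by
      rw [derivative_mul, eval_add, eval_mul, eval_mul, hqa, mul_zero, zero_add, hq']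
      simp
    have hFb : eval ((c : ℂ) - w) (derivative (g * q)) = eval ((c : ℂ) - w) g * (-(2 * w)) := by
      rw [derivative_mul, eval_add, eval_mul, eval_mul, hqb, mul_zero, zero_add, hq']
      simp
    -- product of g at the two quadratic roots
    have hgab : eval ((c : ℂ) + w) g * eval ((c : ℂ) - w) g =
        (M.map fun r => (r - (c : ℂ)) ^ 2 + (s : ℂ)).prod := by
      conv_lhs => rw [hgprod]
      rw [eval_multiset_prod, eval_multiset_prod, Multiset.map_map, Multiset.map_map,
        ← Multiset.prod_map_mul]
      refine congrArg Multiset.prod (Multiset.map_congr rfl ?_)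
      intro r hr
      simp only [Function.comp_apply, eval_sub, eval_X, eval_C]
      linear_combination -hw
    rw [hmap, roots_mul (mul_ne_zero hg0 hq0), hqroots, ← hMdef]
    rw [show ((M + {(c : ℂ) + w, (c : ℂ) - w}).map
        fun r => eval r (derivative (g * q))) =
        (M.map fun r => eval r (derivative (g * q))) +
        {eval ((c : ℂ) + w) (derivative (g * q)), eval ((c : ℂ) - w) (derivative (g * q))}
      from by rw [Multiset.map_add]; rfl]
    rw [Multiset.prod_add]
    rw [Multiset.map_congr rfl hFroot, Multiset.prod_map_mul]
    have hpair : ({eval ((c : ℂ) + w) (derivative (g * q)),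
        eval ((c : ℂ) - w) (derivative (g * q))} : Multiset ℂ).prod =
        eval ((c : ℂ) + w) (derivative (g * q)) * eval ((c : ℂ) - w) (derivative (g * q)) := by
      simp
    rw [hpair, hFa, hFb]
    rw [hPeval]
    have h4 : (2 * w) * (-(2 * w)) = 4 * (s : ℂ) := by linear_combination -4 * hw
    calc (M.map fun r => eval r (derivative g)).prod *
          (M.map fun r => (r - (c : ℂ)) ^ 2 + (s : ℂ)).prod *
          (eval ((c : ℂ) + w) g * (2 * w) * (eval ((c : ℂ) - w) g * (-(2 * w)))) * (-1 : ℂ) ^ e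
        = (M.map fun r => eval r (derivative g)).prod *
          (M.map fun r => (r - (c : ℂ)) ^ 2 + (s : ℂ)).prod *
          ((eval ((c : ℂ) + w) g * eval ((c : ℂ) - w) g) * ((2 * w) * (-(2 * w)))) *
          (-1 : ℂ) ^ e := by ring
      _ = (s : ℂ) * (4 * ((M.map fun r => (r - (c : ℂ)) ^ 2 + (s : ℂ)).prod) ^ 2 *
          ((M.map fun r => eval r (derivative g)).prod) * (-1 : ℂ) ^ e) := by
          rw [hgab, h4]; ring
  -- C₀
  refine ⟨eval 0 P, ?_, ?_⟩
  · rw [hPeval]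
    have h1 : ((M.map fun r => (r - (c : ℂ)) ^ 2 + 0).prod) ≠ 0 := by
      refine Multiset.prod_ne_zero ?_
      simp only [Multiset.mem_map]
      rintro ⟨r, hr, hr0⟩
      rw [add_zero] at hr0
      exact pow_ne_zero 2 (sub_ne_zero.mpr (hroot_ne_c r hr)) hr0
    have h2 : ((M.map fun r => eval r (derivative g)).prod) ≠ 0 := by
      refine Multiset.prod_ne_zero ?_
      simp only [Multiset.mem_map]
      rintro ⟨r, hr, hr0⟩
      exact hder_ne r hr hr0
    exact mul_ne_zero (mul_ne_zero (mul_ne_zero (by norm_num) (pow_ne_zero 2 h1)) h2)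
      (pow_ne_zero e (by norm_num))
  · obtain ⟨R, hR⟩ : X ∣ P - C (eval 0 P) :=
      X_dvd_iff.2 (by simp [coeff_zero_eq_eval_zero])
    have keyeq : ∀ s : ℝ,
        (((G * ((X - Polynomial.C c) ^ 2 + Polynomial.C s)).map
              (algebraMap ℝ ℂ)).roots.map
            (fun r => (((G * ((X - Polynomial.C c) ^ 2 + Polynomial.C s)).map
              (algebraMap ℝ ℂ)).derivative).eval r)).prod *
            (-1 : ℂ) ^ e - eval 0 P * (s : ℂ) = (s : ℂ) ^ 2 * eval (s : ℂ) R := by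
      intro s
      rw [key s]
      have : eval (s : ℂ) (P - C (eval 0 P)) = eval (s : ℂ) (X * R) := by rw [hR]
      simp only [eval_sub, eval_C, eval_mul, eval_X] at this
      linear_combination (s : ℂ) * this
    have h1 : (fun s : ℝ => eval (s : ℂ) R) =O[nhds (0 : ℝ)] (fun _ => (1 : ℂ)) := by
      refine Filter.Tendsto.isBigO_one ℂ (c := eval ((0 : ℝ) : ℂ) R) ?_
      exact ((Polynomial.continuous R).comp Complex.continuous_ofReal).tendsto 0
    have h2 : (fun s : ℝ => ((s : ℂ)) ^ 2) =O[nhds (0 : ℝ)] (fun s : ℝ => (s : ℂ) ^ 2) :=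
      isBigO_refl _ _
    exact (h2.mul h1).congr (fun s => (keyeq s).symm) (fun s => mul_one _)
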